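/- The functions x(y,τ) = α y - (1/λ₁) tanh(ζ₁ + ln|μ₁|), u(y,τ) = v(y,τ) = -(1/λ₁) sech(ζ₁ + ln|μ₁|), where ζ₁ = 2(α λ₁ y + τ/(4λ₁)), satisfy the system x_{yτ} = -(1/2)(uv)_y, u_{yτ} = x_y u, v_{yτ} = x_y v. -/

import Mathlib

private lemma haff (k m s : ℝ) : HasDerivAt (fun t : ℝ => k * t + m) k s := by
  simpa using ((hasDerivAt_id s).const_mul k).add_const m

private lemma hsinh (k m s : ℝ) :
    HasDerivAt (fun t => Real.sinh (k * t + m)) (Real.cosh (k * s + m) * k) s :=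
  (Real.hasDerivAt_sinh _).comp s (haff k m s)

private lemma hcosh (k m s : ℝ) :
    HasDerivAt (fun t => Real.cosh (k * t + m)) (Real.sinh (k * s + m) * k) s :=
  (Real.hasDerivAt_cosh _).comp s (haff k m s)

private lemma htanh (k m s : ℝ) :
    HasDerivAt (fun t => Real.tanh (k * t + m)) (k / Real.cosh (k * s + m) ^ 2) s := by
  have h := (hsinh k m s).div (hcosh k m s) (Real.cosh_pos _).ne'
  have he : (fun t => Real.sinh (k * t + m) / Real.cosh (k * t + m))
      = fun t => Real.tanh (k * t + m) := by
    funext t; rw [Real.tanh_eq_sinh_div_cosh]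
  change HasDerivAt (fun t => Real.sinh (k * t + m) / Real.cosh (k * t + m)) _ s at h
  rw [he] at h
  convert h using 1
  have hC := (Real.cosh_pos (k * s + m)).ne'
  have hsq := Real.cosh_sq_sub_sinh_sq (k * s + m)
  field_simp
  linear_combination (-k) * hsq

private lemma hinvcosh (k m s : ℝ) :
    HasDerivAt (fun t => (Real.cosh (k * t + m))⁻¹)
      (-(Real.sinh (k * s + m) * k) / Real.cosh (k * s + m) ^ 2) s :=
  (hcosh k m s).inv (Real.cosh_pos _).ne'

private lemma hinvcoshsq (k m s : ℝ) :
    HasDerivAt (fun t => (Real.cosh (k * t + m) ^ 2)⁻¹)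
      (-(2 * Real.cosh (k * s + m) * (Real.sinh (k * s + m) * k)) /
        (Real.cosh (k * s + m) ^ 2) ^ 2) s := by
  have h := ((hcosh k m s).pow 2).inv (pow_ne_zero 2 (Real.cosh_pos _).ne')
  change HasDerivAt (fun t => (Real.cosh (k * t + m) ^ 2)⁻¹) _ s at h
  simp only [Pi.pow_apply] at h
  convert h using 1
  push_cast
  ring

private lemma hsdcs (k m s : ℝ) :
    HasDerivAt (fun t => Real.sinh (k * t + m) / Real.cosh (k * t + m) ^ 2)
      ((Real.cosh (k * s + m) * k * Real.cosh (k * s + m) ^ 2 -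
        Real.sinh (k * s + m) * (2 * Real.cosh (k * s + m) * (Real.sinh (k * s + m) * k))) /
        (Real.cosh (k * s + m) ^ 2) ^ 2) s := by
  have h := (hsinh k m s).div ((hcosh k m s).pow 2) (pow_ne_zero 2 (Real.cosh_pos _).ne')
  change HasDerivAt (fun t => Real.sinh (k * t + m) / Real.cosh (k * t + m) ^ 2) _ s at h
  simp only [Pi.pow_apply] at h
  convert h using 1
  push_cast
  ring

/-- Partial derivative with respect to the first variable (y). -/
noncomputable def py (f : ℝ × ℝ → ℝ) (p : ℝ × ℝ) : ℝ :=
  deriv (fun y => f (y, p.2)) p.1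

/-- Partial derivative with respect to the second variable (τ). -/
noncomputable def ptau (f : ℝ × ℝ → ℝ) (p : ℝ × ℝ) : ℝ :=
  deriv (fun τ => f (p.1, τ)) p.2

/-- The one-loop soliton profile satisfies the transformed system
`x_{yτ} = -(1/2)(uv)_y`, `u_{yτ} = x_y u`, `v_{yτ} = x_y v`. -/
theorem stmt6 (α lam1 μ₁ : ℝ) (hlam : lam1 ≠ 0) (hμ : μ₁ ≠ 0) :
    let ζ : ℝ × ℝ → ℝ := fun p => 2 * (α * lam1 * p.1 + p.2 / (4 * lam1))
    let x : ℝ × ℝ → ℝ := fun p => α * p.1 - lam1⁻¹ * Real.tanh (ζ p + Real.log |μ₁|)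
    let u : ℝ × ℝ → ℝ := fun p => -lam1⁻¹ / Real.cosh (ζ p + Real.log |μ₁|)
    let v : ℝ × ℝ → ℝ := fun p => -lam1⁻¹ / Real.cosh (ζ p + Real.log |μ₁|)
    (∀ p, ptau (py x) p = -(1/2) * py (fun s => u s * v s) p) ∧
    (∀ p, ptau (py u) p = py x p * u p) ∧
    (∀ p, ptau (py v) p = py x p * v p) := by
  intro ζ x u v
  set c := Real.log |μ₁| with hc
  have hargy : ∀ q : ℝ × ℝ, ∀ y : ℝ,
      ζ (y, q.2) + c = (2 * α * lam1) * y + (2 * (q.2 / (4 * lam1)) + c) := by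
    intro q y; simp only [ζ]; ring
  have hargt : ∀ q : ℝ × ℝ, ∀ τ : ℝ,
      ζ (q.1, τ) + c = (2 / (4 * lam1)) * τ + (2 * (α * lam1 * q.1) + c) := by
    intro q τ; simp only [ζ]; ring
  have hqeta : ∀ q : ℝ × ℝ, ζ (q.1, q.2) = ζ q := by intro q; simp only [ζ]
  -- x_y
  have hpyx : py x = fun q =>
      α - lam1⁻¹ * ((2 * α * lam1) / Real.cosh (ζ q + c) ^ 2) := by
    funext q
    have hfun : (fun y => x (y, q.2)) = fun y =>
        α * y - lam1⁻¹ * Real.tanh ((2 * α * lam1) * y + (2 * (q.2 / (4 * lam1)) + c)) := by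
      funext y; simp only [x]; rw [hargy q y]
    have h1 : HasDerivAt (fun y : ℝ => α * y) α q.1 := by
      simpa using (hasDerivAt_id q.1).const_mul α
    have h := h1.sub ((htanh (2 * α * lam1) (2 * (q.2 / (4 * lam1)) + c) q.1).const_mul lam1⁻¹)
    rw [py, hfun, (by exact h.deriv : deriv (fun y => α * y - lam1⁻¹ * Real.tanh ((2 * α * lam1) * y + (2 * (q.2 / (4 * lam1)) + c))) q.1 = _), ← hargy q q.1, hqeta q]
  -- u_y
  have hpyu : py u = fun q =>
      (-lam1⁻¹) * (-(Real.sinh (ζ q + c) * (2 * α * lam1)) / Real.cosh (ζ q + c) ^ 2) := by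
    funext q
    have hfun : (fun y => u (y, q.2)) = fun y =>
        (-lam1⁻¹) * (Real.cosh ((2 * α * lam1) * y + (2 * (q.2 / (4 * lam1)) + c)))⁻¹ := by
      funext y; simp only [u]; rw [hargy q y]; ring
    have h := (hinvcosh (2 * α * lam1) (2 * (q.2 / (4 * lam1)) + c) q.1).const_mul (-lam1⁻¹)
    rw [py, hfun, h.deriv, ← hargy q q.1, hqeta q]
  have hC : ∀ p : ℝ × ℝ, Real.cosh (ζ p + c) ≠ 0 := fun p => (Real.cosh_pos _).ne'
  have hsq : ∀ p : ℝ × ℝ, Real.cosh (ζ p + c) ^ 2 - Real.sinh (ζ p + c) ^ 2 = 1 :=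
    fun p => Real.cosh_sq_sub_sinh_sq _
  have key2 : ∀ p, ptau (py u) p = py x p * u p := by
    intro p
    have hfun : (fun τ => py u (p.1, τ)) = fun τ =>
        ((-lam1⁻¹) * (-(2 * α * lam1))) *
          (Real.sinh ((2 / (4 * lam1)) * τ + (2 * (α * lam1 * p.1) + c)) /
            Real.cosh ((2 / (4 * lam1)) * τ + (2 * (α * lam1 * p.1) + c)) ^ 2) := by
      funext τ; rw [hpyu]; simp only
      rw [hargt p τ]; ring
    have h := (hsdcs (2 / (4 * lam1)) (2 * (α * lam1 * p.1) + c) p.2).const_mul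
      ((-lam1⁻¹) * (-(2 * α * lam1)))
    rw [ptau, hfun, h.deriv, ← hargt p p.2, hqeta p, hpyx]
    simp only [u, ← hc]
    have h1 := hC p
    have h2 := hsq p
    field_simp
    linear_combination (8*α) * h2
  refine ⟨?_, key2, fun p => key2 p⟩
  intro p
  have hfun : (fun τ => py x (p.1, τ)) = fun τ =>
      α - (lam1⁻¹ * (2 * α * lam1)) *
        (Real.cosh ((2 / (4 * lam1)) * τ + (2 * (α * lam1 * p.1) + c)) ^ 2)⁻¹ := by
    funext τ; rw [hpyx]; simp only
    rw [hargt p τ]; ring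
  have h := (hasDerivAt_const p.2 α).sub
    ((hinvcoshsq (2 / (4 * lam1)) (2 * (α * lam1 * p.1) + c) p.2).const_mul
      (lam1⁻¹ * (2 * α * lam1)))
  have hfun2 : (fun y => u (y, p.2) * v (y, p.2)) = fun y =>
      (lam1⁻¹ * lam1⁻¹) *
        (Real.cosh ((2 * α * lam1) * y + (2 * (p.2 / (4 * lam1)) + c)) ^ 2)⁻¹ := by
    funext y; simp only [u, v]; rw [hargy p y]; ring
  have h2 := (hinvcoshsq (2 * α * lam1) (2 * (p.2 / (4 * lam1)) + c) p.1).const_mul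
    (lam1⁻¹ * lam1⁻¹)
  rw [ptau, hfun, (by exact h.deriv : deriv (fun τ => α - (lam1⁻¹ * (2 * α * lam1)) *
          (Real.cosh ((2 / (4 * lam1)) * τ + (2 * (α * lam1 * p.1) + c)) ^ 2)⁻¹) p.2 = _), ← hargt p p.2, hqeta p, py, hfun2, h2.deriv, ← hargy p p.1, hqeta p]
  have h1 := hC p
  field_simp
  ring
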